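/- Let α > 0 and λ > 0. For every t > 0 the real-valued function f(t) := E_{α,1}(−λ t^α) = Σ_{k=0}^∞ (−λ t^α)^k / Γ(αk + 1) is differentiable at t with derivative f'(t) = −λ t^{α−1} E_{α,α}(−λ t^α) = −λ t^{α−1} Σ_{k=0}^∞ (−λ t^α)^k / Γ(αk + α). -/

import Mathlib

/-- The real Mittag-Leffler function `E_{α,β}(x) = ∑ xᵏ / Γ(αk + β)`. -/
noncomputable def mittagLefflerReal (α β x : ℝ) : ℝ :=
  ∑' k : ℕ, x ^ k / Real.Gamma (α * k + β)

private lemma pow_sub_le_factorial (M : ℕ) : ∀ m : ℕ, M ^ (m - M) ≤ m.factorial := by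
  intro m
  induction m with
  | zero => simp
  | succ n ih =>
    rcases le_or_gt (n + 1) M with h | h
    · rw [Nat.sub_eq_zero_of_le h, pow_zero]
      exact Nat.one_le_iff_ne_zero.mpr (Nat.factorial_pos _).ne'
    · have h1 : n + 1 - M = (n - M) + 1 := by omega
      rw [h1, pow_succ, Nat.factorial_succ, mul_comm (n + 1)]
      exact Nat.mul_le_mul ih (by omega)

private lemma factorial_le_gamma {x : ℝ} (hx : 2 ≤ x) :
    ((⌊x⌋₊ - 1).factorial : ℝ) ≤ Real.Gamma x := by
  have h2 : (2 : ℕ) ≤ ⌊x⌋₊ := Nat.le_floor (by exact_mod_cast hx)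
  have h1 : (1 : ℕ) ≤ ⌊x⌋₊ := by omega
  have hcast : ((⌊x⌋₊ : ℝ)) = ((⌊x⌋₊ - 1 : ℕ) : ℝ) + 1 := by
    rw [Nat.cast_sub h1, Nat.cast_one]; ring
  have hg : Real.Gamma (⌊x⌋₊ : ℝ) = ((⌊x⌋₊ - 1).factorial : ℝ) := by
    rw [hcast, Real.Gamma_nat_eq_factorial]
  rw [← hg]
  have hfl : (⌊x⌋₊ : ℝ) ≤ x := Nat.floor_le (by linarith)
  rcases eq_or_lt_of_le hfl with h | h
  · rw [h]
  · exact (Real.Gamma_strictMonoOn_Ici (Set.mem_Ici.mpr (by exact_mod_cast h2))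
      (Set.mem_Ici.mpr hx) h).le

private lemma summable_aux (α b R : ℝ) (hα : 0 < α) (hb : 0 < b) (hR : 1 ≤ R) :
    Summable (fun k : ℕ => ((k : ℝ) + 1) * R ^ k / Real.Gamma (α * k + b)) := by
  set M : ℕ := ⌈(2 * R) ^ α⁻¹⌉₊ + 1 with hMdef
  have hM1 : (1 : ℝ) ≤ (M : ℝ) := by
    have : (1 : ℕ) ≤ M := by omega
    exact_mod_cast this
  have hMα : 2 * R ≤ (M : ℝ) ^ α := by
    have h1 : (2 * R) ^ α⁻¹ ≤ (M : ℝ) := by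
      refine le_trans (Nat.le_ceil _) ?_
      exact_mod_cast Nat.le_succ _
    calc 2 * R = ((2 * R) ^ α⁻¹) ^ α := by
          rw [← Real.rpow_mul (by linarith), inv_mul_cancel₀ hα.ne', Real.rpow_one]
      _ ≤ (M : ℝ) ^ α := Real.rpow_le_rpow (by positivity) h1 hα.le
  set K : ℕ := ⌈((M : ℝ) + 2) / α⌉₊ with hKdef
  have hK : (M : ℝ) + 2 ≤ α * K := by
    have := Nat.le_ceil (((M : ℝ) + 2) / α)
    rw [div_le_iff₀ hα] at this
    linarith [this]
  rw [← summable_nat_add_iff K]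
  have hMαpos : (0 : ℝ) < (M : ℝ) ^ α := by positivity
  apply Summable.of_nonneg_of_le
    (f := fun k : ℕ => (R ^ K * ((k : ℝ) + ((K : ℝ) + 1))) * (2⁻¹) ^ k)
  · intro n
    have hΓ : 0 < Real.Gamma (α * ((n + K : ℕ) : ℝ) + b) :=
      Real.Gamma_pos_of_pos (by positivity)
    positivity
  · intro n
    set x : ℝ := α * ((n + K : ℕ) : ℝ) + b with hxdef
    have hx2 : (2 : ℝ) ≤ x := by
      have : α * (K : ℝ) ≤ α * ((n + K : ℕ) : ℝ) := by
        apply mul_le_mul_of_nonneg_left _ hα.le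
        push_cast; linarith [Nat.cast_nonneg (α := ℝ) n]
      nlinarith [this, hK, hM1, hb]
    have hΓ : 0 < Real.Gamma x := Real.Gamma_pos_of_pos (by positivity)
    set m : ℕ := ⌊x⌋₊ - 1 with hmdef
    have hfl2 : (2 : ℕ) ≤ ⌊x⌋₊ := Nat.le_floor (by exact_mod_cast hx2)
    have hmcast : (m : ℝ) = (⌊x⌋₊ : ℝ) - 1 := by
      rw [hmdef, Nat.cast_sub (by omega), Nat.cast_one]
    have hmge : α * (n : ℝ) + (M : ℝ) ≤ (m : ℝ) := by
      have hlt : x < (⌊x⌋₊ : ℝ) + 1 := Nat.lt_floor_add_one x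
      have : x - 2 ≤ (m : ℝ) := by rw [hmcast]; linarith
      have hxval : α * (n : ℝ) + α * (K : ℝ) + b = x := by rw [hxdef]; push_cast; ring
      nlinarith [this, hK, hb]
    have hmM : M ≤ m := by
      have : (M : ℝ) ≤ (m : ℝ) := by nlinarith [hmge, Nat.cast_nonneg (α := ℝ) n, hα.le]
      exact_mod_cast this
    have hfac : ((M : ℝ)) ^ ((m - M : ℕ) : ℝ) ≤ (m.factorial : ℝ) := by
      rw [Real.rpow_natCast]
      exact_mod_cast pow_sub_le_factorial M m
    have hexp : α * (n : ℝ) ≤ ((m - M : ℕ) : ℝ) := by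
      rw [Nat.cast_sub hmM]; linarith [hmge]
    have hΓge : ((M : ℝ) ^ α) ^ n ≤ Real.Gamma x := by
      calc ((M : ℝ) ^ α) ^ n = (M : ℝ) ^ (α * n) := by
            rw [← Real.rpow_natCast ((M : ℝ) ^ α) n, ← Real.rpow_mul (by positivity)]
        _ ≤ (M : ℝ) ^ (((m - M : ℕ) : ℝ)) := Real.rpow_le_rpow_of_exponent_le hM1 hexp
        _ ≤ (m.factorial : ℝ) := hfac
        _ ≤ Real.Gamma x := by
            have := factorial_le_gamma hx2
            rwa [← hmdef] at this
    have hhalf : R ^ n / ((M : ℝ) ^ α) ^ n ≤ (2⁻¹ : ℝ) ^ n := by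
      rw [← div_pow]
      apply pow_le_pow_left₀ (by positivity)
      rw [div_le_iff₀ hMαpos]
      linarith
    calc (((n + K : ℕ) : ℝ) + 1) * R ^ (n + K) / Real.Gamma x
        = (((n : ℝ) + (K : ℝ) + 1) * R ^ K) * (R ^ n / Real.Gamma x) := by
          push_cast [pow_add]; ring
      _ ≤ (((n : ℝ) + (K : ℝ) + 1) * R ^ K) * (R ^ n / ((M : ℝ) ^ α) ^ n) := by
          apply mul_le_mul_of_nonneg_left _ (by positivity)
          exact div_le_div_of_nonneg_left (by positivity) (by positivity) hΓge
      _ ≤ (((n : ℝ) + (K : ℝ) + 1) * R ^ K) * (2⁻¹ : ℝ) ^ n := by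
          apply mul_le_mul_of_nonneg_left hhalf (by positivity)
      _ = (R ^ K * ((n : ℝ) + ((K : ℝ) + 1))) * (2⁻¹) ^ n := by ring
  · have h1 : Summable (fun k : ℕ => (k : ℝ) * (2⁻¹ : ℝ) ^ k) := by
      simpa using summable_pow_mul_geometric_of_norm_lt_one (R := ℝ) 1
        (r := (2⁻¹ : ℝ)) (by norm_num)
    have h2 : Summable (fun k : ℕ => ((K : ℝ) + 1) * (2⁻¹ : ℝ) ^ k) :=
      (summable_geometric_of_lt_one (by norm_num) (by norm_num)).mul_left _
    have := (h1.add h2).mul_left (R ^ K)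
    apply this.congr
    intro k; ring

private lemma hasDerivAt_ml1 (α : ℝ) (hα : 0 < α) (x₀ : ℝ) :
    HasDerivAt (fun x => mittagLefflerReal α 1 x)
      (α⁻¹ * mittagLefflerReal α α x₀) x₀ := by
  set R : ℝ := |x₀| + 1 with hRdef
  have hR : 1 ≤ R := by have := abs_nonneg x₀; linarith
  have hu := summable_aux α 1 R hα one_pos hR
  have hΓpos : ∀ k : ℕ, 0 < Real.Gamma (α * k + 1) :=
    fun k => Real.Gamma_pos_of_pos (by positivity)
  have hmem : x₀ ∈ Metric.ball (0 : ℝ) R := by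
    simp only [Metric.mem_ball, Real.dist_eq, sub_zero]
    linarith
  have hbound : ∀ (k : ℕ) (x : ℝ), x ∈ Metric.ball (0 : ℝ) R →
      ‖((k : ℝ) * x ^ (k - 1)) / Real.Gamma (α * k + 1)‖
        ≤ ((k : ℝ) + 1) * R ^ k / Real.Gamma (α * k + 1) := by
    intro k x hx
    have hxR : |x| ≤ R := by
      simp only [Metric.mem_ball, Real.dist_eq, sub_zero] at hx
      linarith
    rw [Real.norm_eq_abs, abs_div, abs_of_pos (hΓpos k), abs_mul, abs_pow,
      Nat.abs_cast]
    apply div_le_div_of_nonneg_right ?_ (hΓpos k).le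
    calc (k : ℝ) * |x| ^ (k - 1) ≤ ((k : ℝ) + 1) * R ^ (k - 1) := by
          apply mul_le_mul (by linarith) (pow_le_pow_left₀ (abs_nonneg x) hxR _)
            (by positivity) (by positivity)
      _ ≤ ((k : ℝ) + 1) * R ^ k := by
          apply mul_le_mul_of_nonneg_left (pow_le_pow_right₀ hR (Nat.sub_le k 1))
            (by positivity)
  have hsum0 : Summable (fun k : ℕ => x₀ ^ k / Real.Gamma (α * k + 1)) := by
    apply Summable.of_norm_bounded hu
    intro k
    rw [Real.norm_eq_abs, abs_div, abs_of_pos (hΓpos k), abs_pow]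
    apply div_le_div_of_nonneg_right ?_ (hΓpos k).le
    calc |x₀| ^ k ≤ R ^ k := pow_le_pow_left₀ (abs_nonneg x₀) (by linarith) k
      _ ≤ ((k : ℝ) + 1) * R ^ k := by
          apply le_mul_of_one_le_left (by positivity)
          linarith [Nat.cast_nonneg (α := ℝ) k]
  have key := hasDerivAt_tsum_of_isPreconnected hu Metric.isOpen_ball
    (convex_ball (0 : ℝ) R).isPreconnected
    (fun (k : ℕ) (x : ℝ) (_ : x ∈ Metric.ball (0 : ℝ) R) =>
      (hasDerivAt_pow k x).div_const (Real.Gamma (α * k + 1)))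
    hbound hmem hsum0 hmem
  have hsd : Summable (fun k : ℕ => ((k : ℝ) * x₀ ^ (k - 1)) / Real.Gamma (α * k + 1)) :=
    Summable.of_norm_bounded hu (fun k => hbound k x₀ hmem)
  have hval : (∑' k : ℕ, ((k : ℝ) * x₀ ^ (k - 1)) / Real.Gamma (α * k + 1))
      = α⁻¹ * mittagLefflerReal α α x₀ := by
    rw [Summable.tsum_eq_zero_add hsd]
    simp only [Nat.cast_zero, zero_mul, zero_div, zero_add]
    have hterm : ∀ k : ℕ, (((k + 1 : ℕ) : ℝ) * x₀ ^ ((k + 1) - 1)) /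
        Real.Gamma (α * ((k + 1 : ℕ) : ℝ) + 1)
        = α⁻¹ * (x₀ ^ k / Real.Gamma (α * k + α)) := by
      intro k
      have hpos : (0 : ℝ) < α * k + α := by positivity
      have hΓ1 : Real.Gamma (α * ((k + 1 : ℕ) : ℝ) + 1)
          = (α * k + α) * Real.Gamma (α * k + α) := by
        have harg : α * ((k + 1 : ℕ) : ℝ) + 1 = (α * k + α) + 1 := by push_cast; ring
        rw [harg, Real.Gamma_add_one hpos.ne']
      have hΓne : Real.Gamma (α * k + α) ≠ 0 := (Real.Gamma_pos_of_pos hpos).ne'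
      have hexp : (k + 1) - 1 = k := rfl
      rw [hΓ1, hexp]
      push_cast
      field_simp
    rw [tsum_congr hterm, tsum_mul_left, mittagLefflerReal]
  rw [← hval]
  exact key

/-- For `α > 0`, `λ > 0` and `t > 0`, the function `t ↦ E_{α,1}(−λ tᵅ)` is differentiable
at `t` with derivative `−λ t^(α−1) E_{α,α}(−λ tᵅ)`. -/
theorem mittagLeffler_hasDerivAt (α l : ℝ) (hα : 0 < α) (hl : 0 < l) (t : ℝ) (ht : 0 < t) :
    HasDerivAt (fun τ : ℝ => mittagLefflerReal α 1 (-l * τ ^ α))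
      (-l * t ^ (α - 1) * mittagLefflerReal α α (-l * t ^ α)) t := by
  have hg : HasDerivAt (fun τ : ℝ => -l * τ ^ α) (-l * (α * t ^ (α - 1))) t :=
    (Real.hasDerivAt_rpow_const (Or.inl ht.ne')).const_mul (-l)
  have hE := hasDerivAt_ml1 α hα (-l * t ^ α)
  have hcomp := hE.comp t hg
  have heq : -l * t ^ (α - 1) * mittagLefflerReal α α (-l * t ^ α)
      = α⁻¹ * mittagLefflerReal α α (-l * t ^ α) * (-l * (α * t ^ (α - 1))) := by
    field_simp
  rw [heq]
  exact hcomp
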